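/- Let λ > 0, s ≥ 1 an integer, and let the index set be partitioned into K groups of sizes c₁,…,c_K with c_k ≥ s² for each k. Suppose within each group k the lengths ℓ : Fin c_k → ℕ satisfy |{i : ℓ(i) = j}| ≤ s²·2^j for all j. Then the total sum ∑_k ∑_i 2^{λ ℓ_k(i)} ≥ (s²/(2^{λ+1}−1)) · ∑_{k=1}^{K} (2^{(λ+1)·log₂((c_k+s²)/(2s²))} − 1). -/

import Mathlib

open Finset Real

lemma group_bound (l : ℝ) (hl : 0 < l) (s : ℕ) (hs : 1 ≤ s) (c : ℕ) (hc : s ^ 2 ≤ c)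
    (len : Fin c → ℕ)
    (hcount : ∀ j : ℕ, ((Finset.univ.filter (fun i => len i = j)).card) ≤ s ^ 2 * 2 ^ j) :
    ((s : ℝ) ^ 2 / ((2 : ℝ) ^ (l + 1) - 1)) *
        ((2 : ℝ) ^ ((l + 1) * Real.logb 2 (((c : ℝ) + (s : ℝ) ^ 2) / (2 * (s : ℝ) ^ 2))) - 1)
      ≤ ∑ i, (2 : ℝ) ^ (l * (len i : ℝ)) := by
  classical
  set q : ℝ := (2 : ℝ) ^ l with hqdef
  have hq1 : 1 < q := by
    have : (2:ℝ) ^ (0:ℝ) < (2:ℝ) ^ l := by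
      exact Real.rpow_lt_rpow_left_iff (by norm_num) |>.mpr hl
    simpa using this
  have hq0 : 0 < q := lt_trans one_pos hq1
  have hs2 : (1:ℕ) ≤ s ^ 2 := Nat.one_le_pow _ _ hs
  have hs2R : (1:ℝ) ≤ (s:ℝ) ^ 2 := by exact_mod_cast hs2
  have hs2pos : (0:ℝ) < (s:ℝ) ^ 2 := lt_of_lt_of_le one_pos hs2R
  -- the integer m
  set n : ℕ := c / s ^ 2 + 1 with hndef
  have hn2 : 2 ≤ n := by
    have : 1 ≤ c / s ^ 2 := (Nat.one_le_div_iff (lt_of_lt_of_le one_pos hs2)).mpr hc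
    omega
  set m : ℕ := Nat.log 2 n with hmdef
  have hm1 : 1 ≤ m := Nat.le_log_of_pow_le (by norm_num) (by simpa using hn2)
  have hup : s ^ 2 * 2 ^ m ≤ c + s ^ 2 := by
    have h1 : 2 ^ m ≤ n := Nat.pow_log_le_self 2 (by omega)
    have hB : s ^ 2 * n = s ^ 2 * (c / s ^ 2) + s ^ 2 := by
      rw [hndef, Nat.mul_add, mul_one]
    have h2 : s ^ 2 * n ≤ c + s ^ 2 := by
      have := Nat.mul_div_le c (s ^ 2)
      omega
    calc s ^ 2 * 2 ^ m ≤ s ^ 2 * n := Nat.mul_le_mul_left _ h1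
      _ ≤ c + s ^ 2 := h2
  have hlow : c + s ^ 2 ≤ s ^ 2 * 2 ^ (m + 1) := by
    have h1 : n < 2 ^ (m + 1) := Nat.lt_pow_succ_log_self (by norm_num) n
    have h2 : c < s ^ 2 * (c / s ^ 2) + s ^ 2 := by
      have := Nat.div_add_mod c (s ^ 2)
      have hmod : c % s ^ 2 < s ^ 2 := Nat.mod_lt _ (by omega)
      omega
    have hB : s ^ 2 * (n + 1) = s ^ 2 * (c / s ^ 2) + s ^ 2 + s ^ 2 := by
      rw [hndef]; ring
    have hA : s ^ 2 * (n + 1) ≤ s ^ 2 * 2 ^ (m + 1) := Nat.mul_le_mul_left _ (by omega)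
    omega
  -- real casts
  have hupR : (s:ℝ) ^ 2 * 2 ^ m ≤ (c:ℝ) + (s:ℝ) ^ 2 := by exact_mod_cast hup
  have hlowR : (c:ℝ) + (s:ℝ) ^ 2 ≤ (s:ℝ) ^ 2 * 2 ^ (m + 1) := by exact_mod_cast hlow
  set A : ℝ := (c:ℝ) + (s:ℝ) ^ 2 with hAdef
  have hpow : ∀ x : ℕ, (2:ℝ) ^ (l * (x:ℝ)) = q ^ x := by
    intro x
    rw [hqdef, Real.rpow_mul (by norm_num), Real.rpow_natCast]
  have hlayer : ∀ x : ℕ, q ^ x = 1 + ∑ j ∈ Finset.range x, (q ^ (j+1) - q ^ j) := by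
    intro x
    rw [Finset.sum_range_sub (fun j => q ^ j)]
    simp
  have hΔ : ∀ j : ℕ, 0 ≤ q ^ (j+1) - q ^ j := by
    intro j
    rw [pow_succ]
    nlinarith [pow_nonneg hq0.le j]
  have hcount2 : ∀ j : ℕ, A - (s:ℝ) ^ 2 * 2 ^ (j+1)
      ≤ ((Finset.univ.filter (fun i => j < len i)).card : ℝ) := by
    intro j
    have hsplit : (Finset.univ.filter (fun i => j < len i)).card
        + (Finset.univ.filter (fun i => ¬ j < len i)).card = c := by
      rw [Finset.card_filter_add_card_filter_not, Finset.card_univ, Fintype.card_fin]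
    have hfib : (Finset.univ.filter (fun i : Fin c => ¬ j < len i)).card
        = ∑ b ∈ Finset.range (j+1),
          ((Finset.univ.filter (fun i : Fin c => ¬ j < len i)).filter (fun i => len i = b)).card := by
      apply Finset.card_eq_sum_card_fiberwise
      intro x hx
      simp only [Finset.coe_filter, Set.mem_setOf_eq, Finset.mem_filter, Finset.mem_univ, true_and, not_lt] at hx
      exact Finset.mem_range.mpr (Nat.lt_succ_of_le hx)
    have hle : (Finset.univ.filter (fun i : Fin c => ¬ j < len i)).card
        ≤ ∑ b ∈ Finset.range (j+1), s ^ 2 * 2 ^ b := by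
      rw [hfib]
      apply Finset.sum_le_sum
      intro b _
      exact le_trans (Finset.card_le_card
        (Finset.filter_subset_filter _ (Finset.filter_subset _ _))) (hcount b)
    have hgeo : ∑ b ∈ Finset.range (j+1), ((s:ℝ) ^ 2 * 2 ^ b)
        = (s:ℝ) ^ 2 * (2 ^ (j+1) - 1) := by
      rw [← Finset.mul_sum, geom_sum_eq (by norm_num : (2:ℝ) ≠ 1)]
      ring
    have hnegR : ((Finset.univ.filter (fun i : Fin c => ¬ j < len i)).card : ℝ)
        ≤ (s:ℝ) ^ 2 * (2 ^ (j+1) - 1) := by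
      calc ((Finset.univ.filter (fun i : Fin c => ¬ j < len i)).card : ℝ)
          ≤ ∑ b ∈ Finset.range (j+1), ((s:ℝ) ^ 2 * 2 ^ b) := by exact_mod_cast hle
        _ = _ := hgeo
    have hsplitR : ((Finset.univ.filter (fun i => j < len i)).card : ℝ)
        + ((Finset.univ.filter (fun i => ¬ j < len i)).card : ℝ) = (c:ℝ) := by
      exact_mod_cast hsplit
    rw [hAdef]
    linarith
  -- main lower bound via layer cake
  have hmain : (c:ℝ) + ∑ j ∈ Finset.range m, (A - (s:ℝ) ^ 2 * 2 ^ (j+1)) * (q ^ (j+1) - q ^ j)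
      ≤ ∑ i, (2:ℝ) ^ (l * (len i : ℝ)) := by
    have e1 : ∑ i, (2:ℝ) ^ (l * (len i : ℝ))
        = (c:ℝ) + ∑ i, ∑ j ∈ Finset.range (len i), (q ^ (j+1) - q ^ j) := by
      have e0 : ∀ i : Fin c, (2:ℝ) ^ (l * (len i : ℝ))
          = 1 + ∑ j ∈ Finset.range (len i), (q ^ (j+1) - q ^ j) := by
        intro i
        rw [hpow]
        exact hlayer _
      rw [Finset.sum_congr rfl (fun i _ => e0 i), Finset.sum_add_distrib, Finset.sum_const, Finset.card_univ, Fintype.card_fin,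
        nsmul_eq_mul, mul_one]
    rw [e1]
    have e2 : ∀ i : Fin c,
        ∑ j ∈ Finset.range m, (if j < len i then (q ^ (j+1) - q ^ j) else 0)
          ≤ ∑ j ∈ Finset.range (len i), (q ^ (j+1) - q ^ j) := by
      intro i
      rw [← Finset.sum_filter]
      apply Finset.sum_le_sum_of_subset_of_nonneg
      · intro j hj
        simp only [Finset.mem_filter, Finset.mem_range] at hj ⊢
        exact hj.2
      · intro j _ _
        exact hΔ j
    have e3 : ∑ j ∈ Finset.range m, (A - (s:ℝ) ^ 2 * 2 ^ (j+1)) * (q ^ (j+1) - q ^ j)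
        ≤ ∑ i, ∑ j ∈ Finset.range (len i), (q ^ (j+1) - q ^ j) := by
      calc ∑ j ∈ Finset.range m, (A - (s:ℝ) ^ 2 * 2 ^ (j+1)) * (q ^ (j+1) - q ^ j)
          ≤ ∑ j ∈ Finset.range m,
              ((Finset.univ.filter (fun i => j < len i)).card : ℝ) * (q ^ (j+1) - q ^ j) :=
            Finset.sum_le_sum (fun j _ => mul_le_mul_of_nonneg_right (hcount2 j) (hΔ j))
        _ = ∑ j ∈ Finset.range m, ∑ i : Fin c, (if j < len i then (q ^ (j+1) - q ^ j) else 0) := by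
            apply Finset.sum_congr rfl
            intro j _
            rw [← Finset.sum_filter, Finset.sum_const, nsmul_eq_mul]
        _ = ∑ i : Fin c, ∑ j ∈ Finset.range m, (if j < len i then (q ^ (j+1) - q ^ j) else 0) :=
            Finset.sum_comm
        _ ≤ _ := Finset.sum_le_sum (fun i _ => e2 i)
    linarith
  have h2q : (0:ℝ) < 2 * q - 1 := by linarith
  have hYX : (2 * q) ^ m = (2:ℝ) ^ m * q ^ m := mul_pow 2 q m
  have hclosed : ∑ j ∈ Finset.range m, (A - (s:ℝ) ^ 2 * 2 ^ (j+1)) * (q ^ (j+1) - q ^ j)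
      = A * (q ^ m - 1) - 2 * (s:ℝ) ^ 2 * (q - 1) * (((2*q) ^ m - 1) / (2*q - 1)) := by
    have e1 : ∀ j ∈ Finset.range m,
        (A - (s:ℝ) ^ 2 * 2 ^ (j+1)) * (q ^ (j+1) - q ^ j)
          = A * (q ^ (j+1) - q ^ j) - 2 * (s:ℝ) ^ 2 * (q - 1) * (2*q) ^ j := by
      intro j _
      rw [pow_succ 2 j, pow_succ q j, mul_pow]
      ring
    rw [Finset.sum_congr rfl e1, Finset.sum_sub_distrib, ← Finset.mul_sum, ← Finset.mul_sum,
      Finset.sum_range_sub (fun j => q ^ j),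
      geom_sum_eq (ne_of_gt (show (1:ℝ) < 2 * q by linarith)) m, pow_zero]
  -- bound the rpow term
  have hApos : (0:ℝ) < A := by positivity
  have hW : (2:ℝ) ^ ((l + 1) * Real.logb 2 (A / (2 * (s:ℝ) ^ 2)))
      ≤ (2:ℝ) ^ m * q ^ m := by
    have hpos : (0:ℝ) < A / (2 * (s:ℝ) ^ 2) := by positivity
    have hle : A / (2 * (s:ℝ) ^ 2) ≤ (2:ℝ) ^ m := by
      rw [div_le_iff₀ (by positivity)]
      calc A ≤ (s:ℝ) ^ 2 * 2 ^ (m+1) := hlowR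
        _ = (2:ℝ) ^ m * (2 * (s:ℝ) ^ 2) := by rw [pow_succ]; ring
    have e1 : (2:ℝ) ^ ((l + 1) * Real.logb 2 (A / (2 * (s:ℝ) ^ 2)))
        = (A / (2 * (s:ℝ) ^ 2)) ^ (l + 1) := by
      rw [mul_comm, Real.rpow_mul (by norm_num),
        Real.rpow_logb (by norm_num) (by norm_num) hpos]
    have e2 : ((2:ℝ) ^ m) ^ ((l + 1) : ℝ) = (2:ℝ) ^ m * q ^ m := by
      rw [← Real.rpow_natCast (2:ℝ) m, ← Real.rpow_mul (by norm_num : (0:ℝ) ≤ 2),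
        show (m:ℝ) * (l + 1) = l * (m:ℝ) + (m:ℝ) from by ring,
        Real.rpow_add (by norm_num : (0:ℝ) < 2), hpow m, Real.rpow_natCast]
      ring
    rw [e1, ← e2]
    exact Real.rpow_le_rpow hpos.le hle (by linarith)
  have hQ : (2:ℝ) ^ (l + 1) = 2 * q := by
    rw [hqdef, Real.rpow_add (by norm_num : (0:ℝ) < 2), Real.rpow_one]
    ring
  have hcA : (c:ℝ) = A - (s:ℝ) ^ 2 := by rw [hAdef]; ring
  have hfinal : (s:ℝ) ^ 2 / (2 * q - 1) * ((2:ℝ) ^ m * q ^ m - 1)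
      ≤ (c:ℝ) + (A * (q ^ m - 1)
        - 2 * (s:ℝ) ^ 2 * (q - 1) * (((2*q) ^ m - 1) / (2*q - 1))) := by
    have hid : (c:ℝ) + (A * (q ^ m - 1)
          - 2 * (s:ℝ) ^ 2 * (q - 1) * (((2*q) ^ m - 1) / (2*q - 1)))
        - (s:ℝ) ^ 2 / (2 * q - 1) * ((2:ℝ) ^ m * q ^ m - 1)
        = q ^ m * (A - (s:ℝ) ^ 2 * (2:ℝ) ^ m) := by
      rw [hcA, hYX]
      field_simp
      ring
    have hnn : (0:ℝ) ≤ q ^ m * (A - (s:ℝ) ^ 2 * (2:ℝ) ^ m) := by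
      apply mul_nonneg (pow_nonneg hq0.le m)
      linarith
    rw [← sub_nonneg, hid]
    exact hnn
  -- assemble
  have hstep : (s:ℝ) ^ 2 / (2 * q - 1)
        * ((2:ℝ) ^ ((l + 1) * Real.logb 2 (A / (2 * (s:ℝ) ^ 2))) - 1)
      ≤ (s:ℝ) ^ 2 / (2 * q - 1) * ((2:ℝ) ^ m * q ^ m - 1) := by
    apply mul_le_mul_of_nonneg_left (by linarith) (div_nonneg hs2pos.le h2q.le)
  rw [hQ]
  calc (s:ℝ) ^ 2 / (2 * q - 1)
        * ((2:ℝ) ^ ((l + 1) * Real.logb 2 (A / (2 * (s:ℝ) ^ 2))) - 1)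
      ≤ (s:ℝ) ^ 2 / (2 * q - 1) * ((2:ℝ) ^ m * q ^ m - 1) := hstep
    _ ≤ (c:ℝ) + (A * (q ^ m - 1)
        - 2 * (s:ℝ) ^ 2 * (q - 1) * (((2*q) ^ m - 1) / (2*q - 1))) := hfinal
    _ = (c:ℝ) + ∑ j ∈ Finset.range m, (A - (s:ℝ) ^ 2 * 2 ^ (j+1)) * (q ^ (j+1) - q ^ j) := by
        rw [hclosed]
    _ ≤ _ := hmain

theorem side_info_packing_lower_bound
    (l : ℝ) (hl : 0 < l) (s : ℕ) (hs : 1 ≤ s) (K : ℕ) (hK : 1 ≤ K)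
    (c : Fin K → ℕ) (hc : ∀ k, s ^ 2 ≤ c k)
    (len : ∀ k : Fin K, Fin (c k) → ℕ)
    (hcount : ∀ (k : Fin K) (j : ℕ),
      ((Finset.univ.filter (fun i => len k i = j)).card) ≤ s ^ 2 * 2 ^ j) :
    ∑ k, ∑ i, (2 : ℝ) ^ (l * (len k i : ℝ)) ≥
      ((s : ℝ) ^ 2 / ((2 : ℝ) ^ (l + 1) - 1)) *
        ∑ k, ((2 : ℝ) ^ ((l + 1) * Real.logb 2 (((c k : ℝ) + (s : ℝ) ^ 2) / (2 * (s : ℝ) ^ 2))) - 1) := by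
  rw [ge_iff_le, Finset.mul_sum]
  exact Finset.sum_le_sum fun k _ => group_bound l hl s hs (c k) (hc k) (len k) (hcount k)
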